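/- Let (Ω, μ) be a σ-finite measure space and let φ be a Musielak function on Ω with complementary function φ̄(x,s) = sup_{t ≥ 0} (s t − φ(x,t)). Let u_n, u : Ω → ℝ be measurable and suppose u_n converges to u in the modular sense, i.e. there exists λ > 0 such that ∫_Ω φ(x, |u_n(x) − u(x)|/λ) dμ → 0 as n → ∞. Then for every measurable g : Ω → ℝ for which there exists μ₀ > 0 with ∫_Ω φ̄(x, |g(x)|/μ₀) dμ < ∞, the products (u_n − u)·g are integrable for all sufficiently large n and ∫_Ω (u_n(x) − u(x)) g(x) dμ → 0 as n → ∞. -/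

import Mathlib

open MeasureTheory Filter
open scoped ENNReal

noncomputable def rconj (f : ℝ → ℝ) (s : ℝ) : ℝ :=
  sSup {y : ℝ | ∃ t : ℝ, 0 ≤ t ∧ y = s * t - f t}

lemma aux_bddwit (f : ℝ → ℝ)
    (hlim : Tendsto (fun t : ℝ => f t / t) atTop atTop) (s : ℝ) :
    ∃ T : ℝ, 1 ≤ T ∧ ∀ t : ℝ, T ≤ t → s * t ≤ f t := by
  obtain ⟨T₀, hT₀⟩ := (hlim.eventually_ge_atTop s).exists_forall_of_atTop
  refine ⟨max T₀ 1, le_max_right _ _, fun t ht => ?_⟩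
  have h1 : (0:ℝ) < t := lt_of_lt_of_le one_pos ((le_max_right T₀ 1).trans ht)
  have := hT₀ t ((le_max_left T₀ 1).trans ht)
  calc s * t ≤ (f t / t) * t := by
        exact mul_le_mul_of_nonneg_right this h1.le
    _ = f t := by field_simp

lemma aux_bdd (f : ℝ → ℝ) (hnn : ∀ t : ℝ, 0 ≤ t → 0 ≤ f t)
    (hlim : Tendsto (fun t : ℝ => f t / t) atTop atTop) {s : ℝ} (hs : 0 ≤ s) :
    BddAbove {y : ℝ | ∃ t : ℝ, 0 ≤ t ∧ y = s * t - f t} := by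
  obtain ⟨T, hT1, hT⟩ := aux_bddwit f hlim s
  refine ⟨s * T, ?_⟩
  rintro y ⟨t, ht, rfl⟩
  rcases le_total t T with h | h
  · have : s * t ≤ s * T := mul_le_mul_of_nonneg_left h hs
    nlinarith [hnn t ht]
  · have := hT t h
    nlinarith [mul_nonneg hs (le_trans zero_le_one hT1)]

lemma rconj_nonneg (f : ℝ → ℝ) (hzero : f 0 = 0)
    (hnn : ∀ t : ℝ, 0 ≤ t → 0 ≤ f t)
    (hlim : Tendsto (fun t : ℝ => f t / t) atTop atTop) {s : ℝ} (hs : 0 ≤ s) :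
    0 ≤ rconj f s :=
  le_csSup (aux_bdd f hnn hlim hs) ⟨0, le_rfl, by simp [hzero]⟩

lemma young (f : ℝ → ℝ) (hnn : ∀ t : ℝ, 0 ≤ t → 0 ≤ f t)
    (hlim : Tendsto (fun t : ℝ => f t / t) atTop atTop) {s t : ℝ}
    (hs : 0 ≤ s) (ht : 0 ≤ t) : s * t - f t ≤ rconj f s :=
  le_csSup (aux_bdd f hnn hlim hs) ⟨t, ht, rfl⟩

lemma rconj_div_le (f : ℝ → ℝ) (hnn : ∀ t : ℝ, 0 ≤ t → 0 ≤ f t)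
    (hlim : Tendsto (fun t : ℝ => f t / t) atTop atTop) {s k : ℝ}
    (hs : 0 ≤ s) (hk : 1 ≤ k) : rconj f (s / k) ≤ rconj f s / k := by
  have hk0 : (0:ℝ) < k := lt_of_lt_of_le one_pos hk
  refine csSup_le ⟨s / k * 0 - f 0, 0, le_rfl, rfl⟩ ?_
  rintro y ⟨t, ht, rfl⟩
  have h1 : s / k * t - f t ≤ (s * t - f t) / k := by
    rw [le_div_iff₀ hk0]
    have h2 : f t ≤ k * f t := le_mul_of_one_le_left (hnn t ht) hk
    field_simp
    nlinarith [hnn t ht]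
  refine h1.trans ?_
  exact (div_le_div_iff_of_pos_right hk0).2 (young f hnn hlim hs ht)

lemma rconj_zero (f : ℝ → ℝ) (hzero : f 0 = 0)
    (hnn : ∀ t : ℝ, 0 ≤ t → 0 ≤ f t)
    (hlim : Tendsto (fun t : ℝ => f t / t) atTop atTop) :
    rconj f 0 = 0 := by
  refine le_antisymm ?_ (rconj_nonneg f hzero hnn hlim le_rfl)
  refine csSup_le ⟨0 * 0 - f 0, 0, le_rfl, rfl⟩ ?_
  rintro y ⟨t, ht, rfl⟩
  have := hnn t ht
  nlinarith

lemma aux_key (f : ℝ → ℝ) (hzero : f 0 = 0)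
    (hnn : ∀ t : ℝ, 0 ≤ t → 0 ≤ f t)
    (hmono : MonotoneOn f (Set.Ici 0))
    (hpos : ∀ t : ℝ, 0 < t → 0 < f t)
    (hlim : Tendsto (fun t : ℝ => f t / t) atTop atTop)
    {s : ℝ} (hs : 0 ≤ s) :
    Tendsto (fun k : ℕ => (k : ℝ) * rconj f (s / k)) atTop (nhds 0) := by
  have hnonneg : ∀ k : ℕ, 0 ≤ (k : ℝ) * rconj f (s / k) := fun k =>
    mul_nonneg (Nat.cast_nonneg k)
      (rconj_nonneg f hzero hnn hlim (div_nonneg hs (Nat.cast_nonneg k)))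
  rcases eq_or_lt_of_le hs with h0 | hspos
  · have : (fun k : ℕ => (k : ℝ) * rconj f (s / k)) = fun _ => 0 := by
      funext k
      rw [← h0, zero_div, rconj_zero f hzero hnn hlim, mul_zero]
    rw [this]; exact tendsto_const_nhds
  · rw [Metric.tendsto_atTop]
    intro ε hε
    -- get the witnesses
    obtain ⟨T, hT1, hT⟩ := aux_bddwit f hlim s
    set δ' : ℝ := min (ε / (2 * s)) T with hδ'
    have hδpos : 0 < δ' := lt_min (by positivity) (lt_of_lt_of_le one_pos hT1)
    have hc0 : 0 < f δ' := hpos δ' hδpos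
    obtain ⟨K, hK⟩ := exists_nat_ge (s * T / f δ')
    refine ⟨max K 1, fun k hk => ?_⟩
    have hk1 : 1 ≤ k := le_trans (le_max_right K 1) hk
    have hkR : (0:ℝ) < k := by exact_mod_cast hk1
    have hkK : (s * T / f δ') ≤ (k : ℝ) := by
      refine hK.trans ?_
      exact_mod_cast le_trans (le_max_left K 1) hk
    have hub : rconj f (s / k) ≤ ε / (2 * k) := by
      refine csSup_le ⟨s / k * 0 - f 0, 0, le_rfl, rfl⟩ ?_
      rintro y ⟨t, ht, rfl⟩
      rcases le_total t δ' with h | h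
      · have h1 : s * t ≤ s * δ' := mul_le_mul_of_nonneg_left h hspos.le
        have h2 : s * δ' ≤ s * (ε / (2 * s)) := mul_le_mul_of_nonneg_left (min_le_left _ _) hspos.le
        have h3 : s * (ε / (2 * s)) = ε / 2 := by field_simp
        have h4 : s / k * t - f t ≤ s * t / k := by
          have := hnn t ht
          rw [div_mul_eq_mul_div]
          linarith
        refine h4.trans ?_
        rw [div_le_div_iff₀ hkR (by positivity)]
        nlinarith
      · rcases le_total t T with h2 | h2
        · have hft : f δ' ≤ f t := hmono (le_of_lt hδpos) ht h
          have h5 : s * t ≤ s * T := mul_le_mul_of_nonneg_left h2 hspos.le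
          have h6 : s * T ≤ k * f δ' := by
            rw [div_le_iff₀ hc0] at hkK; linarith
          have h7 : s / k * t - f t ≤ 0 := by
            rw [div_mul_eq_mul_div, sub_nonpos, div_le_iff₀ hkR]
            nlinarith
          refine h7.trans (by positivity)
        · have h8 : s * t ≤ f t := hT t h2
          have h7 : s / k * t - f t ≤ 0 := by
            rw [div_mul_eq_mul_div, sub_nonpos, div_le_iff₀ hkR]
            have hk1R : (1:ℝ) ≤ (k:ℝ) := by exact_mod_cast hk1
            nlinarith [hnn t ht]
          refine h7.trans (by positivity)
    have hfin : (k : ℝ) * rconj f (s / k) ≤ ε / 2 := by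
      calc (k : ℝ) * rconj f (s / k) ≤ (k : ℝ) * (ε / (2 * k)) :=
            mul_le_mul_of_nonneg_left hub (le_of_lt hkR)
        _ = ε / 2 := by field_simp
    rw [Real.dist_eq, sub_zero, abs_of_nonneg (hnonneg k)]
    linarith

lemma aux_ratsup (f : ℝ → ℝ) (hnn : ∀ t : ℝ, 0 ≤ t → 0 ≤ f t)
    (hcont : ContinuousOn f (Set.Ici 0))
    (hlim : Tendsto (fun t : ℝ => f t / t) atTop atTop) {s : ℝ} (hs : 0 ≤ s) :
    rconj f s = ⨆ q : ℚ, (s * max (q : ℝ) 0 - f (max (q : ℝ) 0)) := by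
  have hbdd := aux_bdd f hnn hlim hs
  have hrange : BddAbove (Set.range fun q : ℚ => s * max (q : ℝ) 0 - f (max (q : ℝ) 0)) := by
    obtain ⟨M, hM⟩ := hbdd
    refine ⟨M, ?_⟩
    rintro y ⟨q, rfl⟩
    exact hM ⟨max (q : ℝ) 0, le_max_right _ _, rfl⟩
  refine le_antisymm ?_ ?_
  · refine csSup_le ⟨s * 0 - f 0, 0, le_rfl, rfl⟩ ?_
    rintro y ⟨t, ht, rfl⟩
    refine le_of_forall_pos_le_add fun ε hε => ?_
    have hcw : ContinuousWithinAt (fun u => s * u - f u) (Set.Ici 0) t :=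
      ((continuous_const.mul continuous_id).continuousWithinAt).sub (hcont t ht)
    have hmem : {u : ℝ | s * t - f t - ε < s * u - f u} ∈ nhdsWithin t (Set.Ici 0) :=
      hcw (lt_mem_nhds (by linarith : s * t - f t - ε < s * t - f t))
    rw [Metric.mem_nhdsWithin_iff] at hmem
    obtain ⟨δ, hδ, hball⟩ := hmem
    obtain ⟨q, hq1, hq2⟩ := exists_rat_btwn (lt_add_of_pos_right t hδ)
    have hq0 : (0:ℝ) ≤ (q:ℝ) := le_trans ht hq1.le
    have hqin : (q : ℝ) ∈ Metric.ball t δ ∩ Set.Ici 0 := by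
      constructor
      · rw [Metric.mem_ball, Real.dist_eq, abs_of_nonneg (by linarith)]
        linarith
      · exact hq0
    have hqval : s * t - f t - ε < s * (q : ℝ) - f (q : ℝ) := hball hqin
    have hle : s * (q : ℝ) - f (q : ℝ) ≤ ⨆ q : ℚ, (s * max (q : ℝ) 0 - f (max (q : ℝ) 0)) := by
      have := le_ciSup hrange q
      rwa [max_eq_left hq0] at this
    linarith
  · refine ciSup_le fun q => ?_
    exact le_csSup hbdd ⟨max (q : ℝ) 0, le_max_right _ _, rfl⟩

lemma aux_ratsup' (f : ℝ → ℝ) (hnn : ∀ t : ℝ, 0 ≤ t → 0 ≤ f t)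
    (hcont : ContinuousOn f (Set.Ici 0))
    (hlim : Tendsto (fun t : ℝ => f t / t) atTop atTop) {s : ℝ} (hs : 0 ≤ s) :
    ENNReal.ofReal (rconj f s)
      = ⨆ q : ℚ, ENNReal.ofReal (s * max (q : ℝ) 0 - f (max (q : ℝ) 0)) := by
  rw [aux_ratsup f hnn hcont hlim hs]
  have hrange : BddAbove (Set.range fun q : ℚ => s * max (q : ℝ) 0 - f (max (q : ℝ) 0)) := by
    obtain ⟨M, hM⟩ := aux_bdd f hnn hlim hs
    refine ⟨M, ?_⟩
    rintro y ⟨q, rfl⟩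
    exact hM ⟨max (q : ℝ) 0, le_max_right _ _, rfl⟩
  exact Monotone.map_ciSup_of_continuousAt ENNReal.continuous_ofReal.continuousAt
    (fun a b h => ENNReal.ofReal_le_ofReal h) hrange

lemma aux_meas {Ω : Type*} [MeasurableSpace Ω] (φ : Ω → ℝ → ℝ)
    (hφ_meas : ∀ t : ℝ, 0 ≤ t → Measurable fun x => φ x t)
    (hφ_nonneg : ∀ x : Ω, ∀ t : ℝ, 0 ≤ t → 0 ≤ φ x t)
    (hφ_cont : ∀ x : Ω, ContinuousOn (φ x) (Set.Ici 0))
    (hφ_limtop : ∀ x : Ω, Tendsto (fun t : ℝ => φ x t / t) atTop atTop)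
    (w : Ω → ℝ) (hw : Measurable w) (hw0 : ∀ x, 0 ≤ w x) :
    Measurable fun x => ENNReal.ofReal (rconj (φ x) (w x)) := by
  have heq : (fun x => ENNReal.ofReal (rconj (φ x) (w x)))
      = fun x => ⨆ q : ℚ, ENNReal.ofReal (w x * max (q : ℝ) 0 - φ x (max (q : ℝ) 0)) := by
    funext x
    exact aux_ratsup' (φ x) (hφ_nonneg x) (hφ_cont x) (hφ_limtop x) (hw0 x)
  rw [heq]
  refine Measurable.iSup fun q => ?_
  exact ((hw.mul_const _).sub (hφ_meas (max (q : ℝ) 0) (le_max_right _ _))).ennreal_ofReal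

/-- If `φ` is a Musielak function on a σ-finite measure space `Ω` with
complementary function `φ̄(x,s) = sup_{t ≥ 0} (st − φ(x,t))`, and `uₙ → u` in
the modular sense (`∫ φ(x, |uₙ − u|/λ) dμ → 0` for some `λ > 0`), then for every
measurable `g` with `∫ φ̄(x, |g|/μ₀) dμ < ∞` for some `μ₀ > 0`, the products
`(uₙ − u)·g` are integrable for all sufficiently large `n` and
`∫ (uₙ − u) g dμ → 0`. -/
theorem stmt_1 {Ω : Type*} [MeasurableSpace Ω] (μ : Measure Ω) [SigmaFinite μ]
    (φ : Ω → ℝ → ℝ)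
    (hφ_meas : ∀ t : ℝ, 0 ≤ t → Measurable fun x => φ x t)
    (hφ_nonneg : ∀ x : Ω, ∀ t : ℝ, 0 ≤ t → 0 ≤ φ x t)
    (hφ_conv : ∀ x : Ω, ConvexOn ℝ (Set.Ici 0) (φ x))
    (hφ_cont : ∀ x : Ω, ContinuousOn (φ x) (Set.Ici 0))
    (hφ_mono : ∀ x : Ω, MonotoneOn (φ x) (Set.Ici 0))
    (hφ_zero : ∀ x : Ω, φ x 0 = 0)
    (hφ_pos : ∀ x : Ω, ∀ t : ℝ, 0 < t → 0 < φ x t)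
    (hφ_lim0 : ∀ x : Ω,
      Tendsto (fun t : ℝ => φ x t / t) (nhdsWithin 0 (Set.Ioi 0)) (nhds 0))
    (hφ_limtop : ∀ x : Ω, Tendsto (fun t : ℝ => φ x t / t) atTop atTop)
    (φconj : Ω → ℝ → ℝ)
    (hφconj : ∀ x : Ω, ∀ s : ℝ,
      φconj x s = sSup {y : ℝ | ∃ t : ℝ, 0 ≤ t ∧ y = s * t - φ x t})
    (u : ℕ → Ω → ℝ) (v : Ω → ℝ)
    (hu_meas : ∀ n, Measurable (u n)) (hv_meas : Measurable v)
    (lam : ℝ) (hlam : 0 < lam)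
    (hmod : Tendsto
      (fun n => ∫⁻ x, ENNReal.ofReal (φ x (|u n x - v x| / lam)) ∂μ)
      atTop (nhds 0)) :
    ∀ g : Ω → ℝ, Measurable g →
      (∃ μ₀ : ℝ, 0 < μ₀ ∧
        ∫⁻ x, ENNReal.ofReal (φconj x (|g x| / μ₀)) ∂μ < ⊤) →
      (∀ᶠ n in atTop, Integrable (fun x => (u n x - v x) * g x) μ) ∧
        Tendsto (fun n => ∫ x, (u n x - v x) * g x ∂μ) atTop (nhds 0) := by
  
  intro g hg hex
  obtain ⟨μ₀, hμ₀, hfin⟩ := hex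
  have hconj : ∀ x s, φconj x s = rconj (φ x) s := hφconj
  simp only [hconj] at hfin
  set B : Ω → ℝ≥0∞ := fun x => ENNReal.ofReal (rconj (φ x) (|g x| / μ₀)) with hB
  set ρ : ℕ → ℝ≥0∞ :=
    fun n => ∫⁻ x, ENNReal.ofReal (φ x (|u n x - v x| / lam)) ∂μ with hρ
  set T : ℕ → ℝ≥0∞ :=
    fun n => ∫⁻ x, ENNReal.ofReal ‖(u n x - v x) * g x‖ ∂μ with hT
  set F : ℕ → Ω → ℝ≥0∞ :=
    fun k x => (k : ℝ≥0∞) * ENNReal.ofReal (rconj (φ x) (|g x| / μ₀ / k)) with hF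
  have hFmeas : ∀ k : ℕ, Measurable (F k) := by
    intro k
    exact (aux_meas φ hφ_meas hφ_nonneg hφ_cont hφ_limtop
      (fun x => |g x| / μ₀ / (k : ℝ)) ((hg.abs.div_const μ₀).div_const _)
      (fun x => div_nonneg (div_nonneg (abs_nonneg _) hμ₀.le) (Nat.cast_nonneg k))).const_mul _
  have hFleB : ∀ k : ℕ, ∀ᵐ x ∂μ, F k x ≤ B x := by
    intro k
    refine Filter.Eventually.of_forall fun x => ?_
    rcases Nat.eq_zero_or_pos k with rfl | hk
    · simp [hF]
    · have hk1 : (1:ℝ) ≤ (k:ℝ) := by exact_mod_cast hk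
      have hkne : (k:ℝ) ≠ 0 := by positivity
      have hσ : 0 ≤ |g x| / μ₀ := div_nonneg (abs_nonneg _) hμ₀.le
      have h1 : rconj (φ x) (|g x| / μ₀ / k) ≤ rconj (φ x) (|g x| / μ₀) / k :=
        rconj_div_le (φ x) (hφ_nonneg x) (hφ_limtop x) hσ hk1
      calc F k x ≤ (k : ℝ≥0∞) * ENNReal.ofReal (rconj (φ x) (|g x| / μ₀) / k) :=
            mul_le_mul_right (ENNReal.ofReal_le_ofReal h1) _
        _ = B x := by
            rw [← ENNReal.ofReal_natCast k, ← ENNReal.ofReal_mul (Nat.cast_nonneg k)]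
            congr 1
            field_simp
  have hFto : ∀ᵐ x ∂μ, Tendsto (fun k => F k x) atTop (nhds 0) := by
    refine Filter.Eventually.of_forall fun x => ?_
    have hkey := aux_key (φ x) (hφ_zero x) (hφ_nonneg x) (hφ_mono x) (hφ_pos x)
      (hφ_limtop x) (s := |g x| / μ₀) (div_nonneg (abs_nonneg _) hμ₀.le)
    have h2 := ENNReal.tendsto_ofReal hkey
    rw [ENNReal.ofReal_zero] at h2
    refine h2.congr fun k => ?_
    rw [ENNReal.ofReal_mul (Nat.cast_nonneg k), ENNReal.ofReal_natCast]
  have hD : Tendsto (fun k => ∫⁻ x, F k x ∂μ) atTop (nhds 0) := by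
    have h := tendsto_lintegral_of_dominated_convergence (μ := μ) (f := fun _ => 0)
      B hFmeas hFleB hfin.ne hFto
    simpa [lintegral_zero] using h
  have hprod : ∀ k : ℕ, 1 ≤ k → ∀ (n : ℕ) (x : Ω),
      ENNReal.ofReal ‖(u n x - v x) * g x‖ ≤
        ENNReal.ofReal (lam * μ₀) *
          ((k : ℝ≥0∞) * ENNReal.ofReal (φ x (|u n x - v x| / lam)) + F k x) := by
    intro k hk n x
    have hkR : (0:ℝ) < (k:ℝ) := by exact_mod_cast hk
    have ht0 : 0 ≤ |u n x - v x| / lam := div_nonneg (abs_nonneg _) hlam.le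
    have hs0 : 0 ≤ |g x| / μ₀ / k :=
      div_nonneg (div_nonneg (abs_nonneg _) hμ₀.le) hkR.le
    have hY : (|g x| / μ₀ / k) * (|u n x - v x| / lam) ≤
        φ x (|u n x - v x| / lam) + rconj (φ x) (|g x| / μ₀ / k) := by
      have := young (φ x) (hφ_nonneg x) (hφ_limtop x) hs0 ht0
      linarith
    have hmul : ‖(u n x - v x) * g x‖ =
        (lam * μ₀ * k) * ((|g x| / μ₀ / k) * (|u n x - v x| / lam)) := by
      rw [Real.norm_eq_abs, abs_mul]
      field_simp
    have hc : (0:ℝ) ≤ lam * μ₀ * k := by positivity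
    have ha : 0 ≤ φ x (|u n x - v x| / lam) := hφ_nonneg x _ ht0
    have hb : 0 ≤ rconj (φ x) (|g x| / μ₀ / k) :=
      rconj_nonneg (φ x) (hφ_zero x) (hφ_nonneg x) (hφ_limtop x) hs0
    calc ENNReal.ofReal ‖(u n x - v x) * g x‖
        = ENNReal.ofReal ((lam * μ₀ * k) *
            ((|g x| / μ₀ / k) * (|u n x - v x| / lam))) := by rw [hmul]
      _ ≤ ENNReal.ofReal ((lam * μ₀ * k) *
            (φ x (|u n x - v x| / lam) + rconj (φ x) (|g x| / μ₀ / k))) :=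
          ENNReal.ofReal_le_ofReal (mul_le_mul_of_nonneg_left hY hc)
      _ = ENNReal.ofReal (lam * μ₀) *
          ((k : ℝ≥0∞) * ENNReal.ofReal (φ x (|u n x - v x| / lam)) + F k x) := by
          rw [ENNReal.ofReal_mul hc, ENNReal.ofReal_add ha hb,
            ENNReal.ofReal_mul (by positivity : (0:ℝ) ≤ lam * μ₀),
            ENNReal.ofReal_natCast]
          simp only [hF]
          ring
  have hTle : ∀ k : ℕ, 1 ≤ k → ∀ n : ℕ,
      T n ≤ ENNReal.ofReal (lam * μ₀) * ((k : ℝ≥0∞) * ρ n + ∫⁻ x, F k x ∂μ) := by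
    intro k hk n
    calc T n ≤ ∫⁻ x, ENNReal.ofReal (lam * μ₀) *
          ((k : ℝ≥0∞) * ENNReal.ofReal (φ x (|u n x - v x| / lam)) + F k x) ∂μ :=
          lintegral_mono (hprod k hk n)
      _ = ENNReal.ofReal (lam * μ₀) * ∫⁻ x,
            ((k : ℝ≥0∞) * ENNReal.ofReal (φ x (|u n x - v x| / lam)) + F k x) ∂μ :=
          lintegral_const_mul' _ _ ENNReal.ofReal_ne_top
      _ = ENNReal.ofReal (lam * μ₀) * ((k : ℝ≥0∞) * ρ n + ∫⁻ x, F k x ∂μ) := by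
          rw [lintegral_add_right _ (hFmeas k),
            lintegral_const_mul' _ _ (ENNReal.natCast_ne_top k)]
  have hT0 : Tendsto T atTop (nhds 0) := by
    rw [ENNReal.tendsto_nhds_zero]
    intro ε hε
    have hCD : Tendsto (fun k => ENNReal.ofReal (lam * μ₀) * ∫⁻ x, F k x ∂μ)
        atTop (nhds 0) := by
      simpa using ENNReal.Tendsto.const_mul hD (Or.inr ENNReal.ofReal_ne_top)
    have hhalf : (0:ℝ≥0∞) < ε / 2 := ENNReal.half_pos hε.ne'
    obtain ⟨k, hkD, hk1⟩ :=
      ((ENNReal.tendsto_nhds_zero.mp hCD _ hhalf).and (eventually_ge_atTop 1)).exists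
    have hCn : Tendsto (fun n => ENNReal.ofReal (lam * μ₀) * ((k : ℝ≥0∞) * ρ n))
        atTop (nhds 0) := by
      have h := ENNReal.Tendsto.const_mul hmod (Or.inr (ENNReal.natCast_ne_top k))
      have h2 := ENNReal.Tendsto.const_mul (a := ENNReal.ofReal (lam * μ₀)) h
        (Or.inr ENNReal.ofReal_ne_top)
      simpa using h2
    filter_upwards [ENNReal.tendsto_nhds_zero.mp hCn _ hhalf] with n hn
    calc T n ≤ ENNReal.ofReal (lam * μ₀) * ((k : ℝ≥0∞) * ρ n + ∫⁻ x, F k x ∂μ) :=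
          hTle k hk1 n
      _ = ENNReal.ofReal (lam * μ₀) * ((k : ℝ≥0∞) * ρ n) +
          ENNReal.ofReal (lam * μ₀) * ∫⁻ x, F k x ∂μ := mul_add _ _ _
      _ ≤ ε / 2 + ε / 2 := add_le_add hn hkD
      _ = ε := ENNReal.add_halves ε
  have hev3 : ∀ᶠ n in atTop, T n < ⊤ := by
    filter_upwards [ENNReal.tendsto_nhds_zero.mp hT0 1 one_pos] with n hn
    exact lt_of_le_of_lt hn ENNReal.one_lt_top
  constructor
  · filter_upwards [hev3] with n hn
    exact ⟨(((hu_meas n).sub hv_meas).mul hg).aestronglyMeasurable,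
      (hasFiniteIntegral_iff_norm _).2 hn⟩
  · have hbound : ∀ n, ‖∫ x, (u n x - v x) * g x ∂μ‖ ≤ (T n).toReal := fun n =>
      norm_integral_le_lintegral_norm _
    have htr : Tendsto (fun n => (T n).toReal) atTop (nhds 0) := by
      have := (ENNReal.tendsto_toReal (by simp : (0:ℝ≥0∞) ≠ ⊤)).comp hT0
      simpa [Function.comp_def] using this
    exact squeeze_zero_norm hbound htr
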